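/- Let X, Y be complex vector spaces with a sesquilinear pairing Ω : X × Y → ℂ, and let λ ⊆ X be a linear subspace. If the quotient (λ + Y^{Ω,l})/Y^{Ω,l} is finite-dimensional, then dim (λ + Y^{Ω,l})/Y^{Ω,l} = dim Y/λ^{Ω,r}, and λ + Y^{Ω,l} = (λ^{Ω,r})^{Ω,l}. -/

import Mathlib

universe u

/-- The right annihilator `λ^{Ω,r} = {y ∈ Y : Ω(x,y) = 0 for all x ∈ λ}`. -/
noncomputable def rAnn {X Y : Type*} [AddCommGroup X] [Module ℂ X] [AddCommGroup Y] [Module ℂ Y]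
    (Ω : X →ₗ[ℂ] Y →ₗ⋆[ℂ] ℂ) (l : Submodule ℂ X) : Submodule ℂ Y :=
  ⨅ x ∈ l, LinearMap.ker (Ω x)

/-- The left annihilator `μ^{Ω,l} = {x ∈ X : Ω(x,y) = 0 for all y ∈ μ}`. -/
noncomputable def lAnn {X Y : Type*} [AddCommGroup X] [Module ℂ X] [AddCommGroup Y] [Module ℂ Y]
    (Ω : X →ₗ[ℂ] Y →ₗ⋆[ℂ] ℂ) (m : Submodule ℂ Y) : Submodule ℂ X where
  carrier := {x | ∀ y ∈ m, Ω x y = 0}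
  add_mem' := by
    intro a b ha hb y hy
    simp only [Set.mem_setOf_eq] at ha hb
    simp [map_add, LinearMap.add_apply, ha y hy, hb y hy]
  zero_mem' := by
    intro y hy
    simp
  smul_mem' := by
    intro c x hx y hy
    simp only [Set.mem_setOf_eq] at hx
    simp [map_smul, LinearMap.smul_apply, hx y hy]

/-- Conjugate of a conjugate-linear functional, as a linear functional. -/
noncomputable def conjComp {Y : Type*} [AddCommGroup Y] [Module ℂ Y]
    (g : Y →ₗ⋆[ℂ] ℂ) : Y →ₗ[ℂ] ℂ where
  toFun y := starRingEnd ℂ (g y)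
  map_add' a b := by simp
  map_smul' c y := by simp

lemma conjComp_apply {Y : Type*} [AddCommGroup Y] [Module ℂ Y]
    (g : Y →ₗ⋆[ℂ] ℂ) (y : Y) : conjComp g y = starRingEnd ℂ (g y) := rfl

lemma mem_rAnn_iff {X Y : Type*} [AddCommGroup X] [Module ℂ X] [AddCommGroup Y] [Module ℂ Y]
    (Ω : X →ₗ[ℂ] Y →ₗ⋆[ℂ] ℂ) (l : Submodule ℂ X) (y : Y) :
    y ∈ rAnn Ω l ↔ ∀ x ∈ l, Ω x y = 0 := by
  simp [rAnn, Submodule.mem_iInf, LinearMap.mem_ker]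

/-- If `(λ + Y^{Ω,l})/Y^{Ω,l}` is finite-dimensional, then its dimension
equals `dim Y/λ^{Ω,r}`, and `λ + Y^{Ω,l} = (λ^{Ω,r})^{Ω,l}`. -/
theorem dim_quot_eq_and_double_ann {X Y : Type u}
    [AddCommGroup X] [Module ℂ X] [AddCommGroup Y] [Module ℂ Y]
    (Ω : X →ₗ[ℂ] Y →ₗ⋆[ℂ] ℂ) (l : Submodule ℂ X)
    [FiniteDimensional ℂ ↥(l.map (lAnn Ω (⊤ : Submodule ℂ Y)).mkQ)] :
    Module.rank ℂ ↥(l.map (lAnn Ω (⊤ : Submodule ℂ Y)).mkQ)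
      = Module.rank ℂ (Y ⧸ rAnn Ω l) ∧
    l ⊔ lAnn Ω (⊤ : Submodule ℂ Y) = lAnn Ω (rAnn Ω l) := by
  classical
  set N := lAnn Ω (⊤ : Submodule ℂ Y) with hN
  set V := l.map N.mkQ with hV
  have hNmem : ∀ x, x ∈ N ↔ ∀ y : Y, Ω x y = 0 := by
    intro x
    constructor
    · intro h y; exact h y trivial
    · intro h y _; exact h y
  set n := Module.finrank ℂ V with hn
  let b : Module.Basis (Fin n) ℂ V := Module.finBasis ℂ V
  -- lift the basis to elements of l
  have hlift : ∀ i : Fin n, ∃ x ∈ l, N.mkQ x = (b i : X ⧸ N) := by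
    intro i
    exact Submodule.mem_map.1 (b i).2
  choose xi hxil hxiq using hlift
  -- the functionals
  set f : Fin n → (Y →ₗ[ℂ] ℂ) := fun i => conjComp (Ω (xi i)) with hf
  have hkerf : ∀ i, LinearMap.ker (f i) = LinearMap.ker (Ω (xi i)) := by
    intro i
    ext y
    simp [hf, LinearMap.mem_ker, conjComp_apply, map_eq_zero]
  -- key: for x ∈ l, Ω x is a combination of Ω (xi i)
  have hcomb : ∀ x ∈ l, ∃ c : Fin n → ℂ, x - (∑ i, c i • xi i) ∈ N := by
    intro x hx
    set v : V := ⟨N.mkQ x, Submodule.mem_map_of_mem hx⟩ with hv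
    refine ⟨fun i => b.repr v i, ?_⟩
    show x - ∑ i, b.repr v i • xi i ∈ N
    have hsum : N.mkQ (∑ i, b.repr v i • xi i) = N.mkQ x := by
      have : (v : X ⧸ N) = ∑ i, b.repr v i • (b i : X ⧸ N) := by
        conv_lhs => rw [← b.sum_repr v]
        push_cast
        rfl
      simp only [map_sum, map_smul, hxiq]
      rw [← this]
    have h0 : N.mkQ (x - ∑ i, b.repr v i • xi i) = 0 := by
      rw [map_sub, hsum, sub_self]
    have := LinearMap.mem_ker.2 h0
    rwa [Submodule.ker_mkQ] at this
  -- rAnn Ω l = ⨅ i, ker (f i)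
  have hrAnn : rAnn Ω l = ⨅ i, LinearMap.ker (f i) := by
    apply le_antisymm
    · refine le_iInf fun i => ?_
      rw [hkerf]
      intro y hy
      exact (mem_rAnn_iff Ω l y).1 hy _ (hxil i)
    · intro y hy
      rw [mem_rAnn_iff]
      intro x hx
      obtain ⟨c, hc⟩ := hcomb x hx
      have h1 : Ω (x - ∑ i, c i • xi i) y = 0 := ((hNmem _).1 hc) y
      have h2 : ∀ i, Ω (xi i) y = 0 := by
        intro i
        have := Submodule.mem_iInf (fun i => LinearMap.ker (f i)) |>.1 hy i
        rw [hkerf] at this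
        exact this
      have : Ω x y = Ω (x - ∑ i, c i • xi i) y + ∑ i, c i • (Ω (xi i) y) := by
        simp [map_sub, map_sum, map_smul, LinearMap.sub_apply, LinearMap.sum_apply,
          LinearMap.smul_apply, smul_eq_mul]
      rw [this, h1, zero_add]
      simp [h2]
  -- T : Y → ℂ^n
  set T : Y →ₗ[ℂ] (Fin n → ℂ) := LinearMap.pi f with hT
  have hkerT : LinearMap.ker T = rAnn Ω l := by
    rw [hrAnn, LinearMap.ker_pi]
  -- T is surjective
  have hTsurj : Function.Surjective T := by
    rw [← LinearMap.range_eq_top]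
    by_contra hrange
    obtain ⟨φ, hφne, hφ⟩ := (LinearMap.range T).exists_dual_map_eq_bot_of_lt_top
      (lt_top_iff_ne_top.mpr hrange) inferInstance
    set c : Fin n → ℂ := fun i => φ (Pi.single i 1) with hc
    have hphiy : ∀ y : Y, φ (T y) = 0 := by
      intro y
      have : φ (T y) ∈ (LinearMap.range T).map φ := ⟨T y, ⟨y, rfl⟩, rfl⟩
      rw [hφ] at this
      simpa using this
    have hz : (∑ i, starRingEnd ℂ (c i) • xi i) ∈ N := by
      rw [hNmem]
      intro y
      have h1 : φ (T y) = ∑ i, c i * (f i y) := by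
        have : T y = ∑ i, (f i y) • (Pi.single i 1 : Fin n → ℂ) := by
          ext j
          simp [hT, LinearMap.pi_apply, Pi.single_apply, mul_comm]
        rw [this, map_sum]
        congr 1; ext i
        rw [map_smul]
        simp [hc, smul_eq_mul, mul_comm]
      have h2 : Ω (∑ i, starRingEnd ℂ (c i) • xi i) y
          = ∑ i, starRingEnd ℂ (c i) * (Ω (xi i) y) := by
        simp [map_sum, map_smul, LinearMap.sum_apply, LinearMap.smul_apply, smul_eq_mul]
      rw [h2]
      have h3 : ∑ i, starRingEnd ℂ (c i) * (Ω (xi i) y)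
          = starRingEnd ℂ (∑ i, c i * (f i y)) := by
        rw [map_sum]
        congr 1; ext i
        rw [map_mul]
        simp [hf, conjComp_apply]
      rw [h3, ← h1, hphiy y, map_zero]
    -- hence mkQ of that sum is 0, so coefficients vanish
    have hq : ∑ i, starRingEnd ℂ (c i) • (b i) = (0 : V) := by
      have : N.mkQ (∑ i, starRingEnd ℂ (c i) • xi i) = 0 := by
        rw [← LinearMap.mem_ker, Submodule.ker_mkQ]; exact hz
      apply Subtype.ext
      push_cast
      simpa [map_sum, map_smul, hxiq] using this
    have hc0 : ∀ i, starRingEnd ℂ (c i) = 0 := by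
      intro i
      have := b.linearIndependent
      have h := linearIndependent_iff'.1 this Finset.univ
        (fun i => starRingEnd ℂ (c i)) hq i (Finset.mem_univ i)
      exact h
    have hcz : ∀ i, c i = 0 := fun i => by
      have := hc0 i; rwa [map_eq_zero] at this
    apply hφne
    -- φ vanishes on all Pi.single, which span
    have hall : ∀ v : Fin n → ℂ, φ v = 0 := by
      intro v
      have hv' : v = ∑ i, v i • (Pi.single i 1 : Fin n → ℂ) := by
        ext j
        simp [Pi.single_apply, mul_comm]
      rw [hv', map_sum]
      simp only [map_smul]
      have hz0 : ∀ i : Fin n, φ (Pi.single i 1 : Fin n → ℂ) = 0 := fun i => hcz i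
      simp [hz0]
    exact LinearMap.ext fun w => by rw [hall w, LinearMap.zero_apply]
  -- Part 1: rank equality
  have equiv1 : (Y ⧸ rAnn Ω l) ≃ₗ[ℂ] (Fin n → ℂ) := by
    rw [← hkerT]
    exact T.quotKerEquivOfSurjective hTsurj
  have rank1 : Module.rank ℂ (Y ⧸ rAnn Ω l) = n := by
    have h := equiv1.lift_rank_eq
    rw [rank_fin_fun] at h
    simpa [Cardinal.lift_uzero, Cardinal.lift_natCast] using h
  have rankV : Module.rank ℂ V = n := (Module.finrank_eq_rank ℂ V).symm
  constructor
  · rw [rank1]; exact rankV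
  · -- Part 2
    apply le_antisymm
    · rw [sup_le_iff]
      constructor
      · intro x hx y hy
        exact (mem_rAnn_iff Ω l y).1 hy x hx
      · intro x hx y _
        exact (hNmem x).1 hx y
    · intro x hx
      -- Ω x vanishes on rAnn l = ⨅ ker f i, so conjComp (Ω x) ∈ span of f
      have hker : ⨅ i, LinearMap.ker (f i) ≤ LinearMap.ker (conjComp (Ω x)) := by
        rw [← hrAnn]
        intro y hy
        rw [LinearMap.mem_ker, conjComp_apply, map_eq_zero]
        exact hx y hy
      have hspan := mem_span_of_iInf_ker_le_ker hker
      obtain ⟨c, hcK⟩ := (Submodule.mem_span_range_iff_exists_fun ℂ).1 hspan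
      have hx' : x - (∑ i, starRingEnd ℂ (c i) • xi i) ∈ N := by
        rw [hNmem]
        intro y
        have h1 : conjComp (Ω x) y = ∑ i, c i * f i y := by
          rw [← hcK]
          simp [LinearMap.sum_apply, LinearMap.smul_apply, smul_eq_mul]
        have h2 : Ω x y = ∑ i, starRingEnd ℂ (c i) * Ω (xi i) y := by
          have h1' := congrArg (starRingEnd ℂ) h1
          rw [conjComp_apply, Complex.conj_conj, map_sum] at h1'
          rw [h1']
          refine Finset.sum_congr rfl fun i _ => ?_
          rw [map_mul]
          simp [hf, conjComp_apply, Complex.conj_conj]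
        rw [map_sub, LinearMap.sub_apply, h2]
        simp [map_sum, map_smul, LinearMap.sum_apply, LinearMap.smul_apply, smul_eq_mul]
      have hxsum : (∑ i, starRingEnd ℂ (c i) • xi i) ∈ l :=
        Submodule.sum_mem _ fun i _ => Submodule.smul_mem _ _ (hxil i)
      have : x = (∑ i, starRingEnd ℂ (c i) • xi i) + (x - ∑ i, starRingEnd ℂ (c i) • xi i) := by
        abel
      rw [this]
      exact Submodule.add_mem _ (Submodule.mem_sup_left hxsum) (Submodule.mem_sup_right hx')
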